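/- Suppose G_1 and G_2 are connected finite simple graphs, u_1 is a vertex of G_1, u_2 is a vertex of G_2, and G_1 − u_1 is isomorphic to G_2 − u_2. If φ_{G_2}(ρ(G_1)) > 0, then ρ(G_1) > ρ(G_2). -/

import Mathlib

set_option linter.unusedSectionVars false
set_option maxHeartbeats 1000000

open Finset
open scoped Classical

/-- Adjacency matrix of a simple graph over `ℝ`. -/
noncomputable def adjM {V : Type*} [Fintype V] (G : SimpleGraph V) : Matrix V V ℝ :=
  fun a b => if G.Adj a b then 1 else 0

/-- Spectral radius: the largest eigenvalue of the adjacency matrix. -/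
noncomputable def specRad {V : Type*} [Fintype V] (G : SimpleGraph V) : ℝ :=
  sSup {t : ℝ | ∃ f : V → ℝ, f ≠ 0 ∧ (adjM G).mulVec f = t • f}

/-- Characteristic polynomial of the adjacency matrix, as a function `φ_G(λ) = det(λI − A)`. -/
noncomputable def phi {V : Type*} [Fintype V] [DecidableEq V] (G : SimpleGraph V) (l : ℝ) : ℝ :=
  (l • (1 : Matrix V V ℝ) - adjM G).det

/-- `G` is connected with diameter exactly `D`. -/
def hasDiam {V : Type*} (G : SimpleGraph V) (D : ℕ) : Prop :=
  G.Connected ∧ (∀ u v : V, G.dist u v ≤ D) ∧ ∃ u v : V, G.dist u v = D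

/-- `G` is a minimizer graph among connected graphs on `n` vertices with diameter `D`. -/
def IsMinimizer (n D : ℕ) (G : SimpleGraph (Fin n)) : Prop :=
  hasDiam G D ∧ ∀ H : SimpleGraph (Fin n), hasDiam H D → specRad G ≤ specRad H

noncomputable def x1 (l : ℝ) : ℝ := (l - Real.sqrt (l ^ 2 - 4)) / 2
noncomputable def x2 (l : ℝ) : ℝ := (l + Real.sqrt (l ^ 2 - 4)) / 2
noncomputable def d1f (l : ℝ) : ℝ := l - x1 l ^ 3
noncomputable def d2f (l : ℝ) : ℝ := x2 l ^ 3 - l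

/-- Deletion of a vertex from a graph. -/
def delVert {V : Type*} (G : SimpleGraph V) (v : V) : SimpleGraph {u : V // u ≠ v} :=
  SimpleGraph.comap Subtype.val G

noncomputable def pfun {V : Type*} [Fintype V] [DecidableEq V] (G : SimpleGraph V) (v : V)
    (l : ℝ) : ℝ :=
  (phi (delVert G v) l - x1 l * phi G l) / (x2 l - x1 l)

noncomputable def qfun {V : Type*} [Fintype V] [DecidableEq V] (G : SimpleGraph V) (v : V)
    (l : ℝ) : ℝ :=
  (x2 l * phi G l - phi (delVert G v) l) / (x2 l - x1 l)

/-! ### Auxiliary spectral theory -/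

namespace SpecAux

open Matrix

section Spectral
variable {V : Type*} [Fintype V] [DecidableEq V] {A : Matrix V V ℝ}

/-- The set of eigenvalues of a matrix. -/
def evs (A : Matrix V V ℝ) : Set ℝ := {t : ℝ | ∃ f : V → ℝ, f ≠ 0 ∧ A *ᵥ f = t • f}

lemma inner_eq_dot (a b : EuclideanSpace ℝ V) : (inner ℝ a b : ℝ) = (⇑a) ⬝ᵥ (⇑b) := by
  simp [PiLp.inner_apply, dotProduct, RCLike.inner_apply, mul_comm]

lemma sum_dotP (g : V → V → ℝ) (w : V → ℝ) : (∑ j, g j) ⬝ᵥ w = ∑ j, g j ⬝ᵥ w := by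
  simp only [dotProduct, Finset.sum_apply, Finset.sum_mul]
  exact Finset.sum_comm

lemma dotP_sum (w : V → ℝ) (g : V → V → ℝ) : w ⬝ᵥ (∑ j, g j) = ∑ j, w ⬝ᵥ g j := by
  simp only [dotProduct, Finset.sum_apply, Finset.mul_sum]
  exact Finset.sum_comm

lemma mulVec_sumv (g : V → V → ℝ) : A *ᵥ (∑ j, g j) = ∑ j, A *ᵥ (g j) := by
  simpa only [Matrix.mulVecLin_apply] using map_sum A.mulVecLin g Finset.univ

lemma sum_split (u : V) (f : V → ℝ) : ∑ v, f v = f u + ∑ w : {v : V // v ≠ u}, f w.1 := by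
  rw [Fintype.sum_eq_add_sum_compl u f]
  congr 1
  exact (Finset.sum_subtype (p := fun v => v ≠ u) {u}ᶜ (fun x => by simp) f)

lemma dot_mulVec_double (x z : V → ℝ) :
    x ⬝ᵥ (A *ᵥ z) = ∑ v, ∑ w, A v w * x v * z w := by
  simp only [dotProduct, Matrix.mulVec, Finset.mul_sum]
  refine Finset.sum_congr rfl fun v _ => Finset.sum_congr rfl fun w _ => by ring

variable (hA : A.IsHermitian)
include hA

/-- eigenvector basis as plain functions -/
noncomputable def evB (j : V) : V → ℝ := ⇑(hA.eigenvectorBasis j)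

lemma evB_mulVec (j : V) : A *ᵥ evB hA j = hA.eigenvalues j • evB hA j :=
  hA.mulVec_eigenvectorBasis j

lemma evB_dot (i j : V) : evB hA i ⬝ᵥ evB hA j = if i = j then 1 else 0 := by
  have h := (orthonormal_iff_ite (𝕜 := ℝ)).1 hA.eigenvectorBasis.orthonormal i j
  rw [inner_eq_dot] at h
  simpa [evB] using h

/-- coefficients of x in the eigenvector basis -/
noncomputable def coef (x : V → ℝ) (j : V) : ℝ := evB hA j ⬝ᵥ x

lemma x_eq_sum (x : V → ℝ) : x = ∑ j, coef hA x j • evB hA j := by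
  have h := (hA.eigenvectorBasis.sum_repr (WithLp.toLp 2 x : EuclideanSpace ℝ V)).symm
  funext i
  conv_lhs => rw [show x i = (∑ j, hA.eigenvectorBasis.repr (WithLp.toLp 2 x) j • hA.eigenvectorBasis j : EuclideanSpace ℝ V) i from congrFun (congrArg (fun (v : EuclideanSpace ℝ V) => (v : V → ℝ)) h) i]
  rw [show ((∑ j, hA.eigenvectorBasis.repr (WithLp.toLp 2 x) j • hA.eigenvectorBasis j : EuclideanSpace ℝ V) : V → ℝ) i = ∑ j, (hA.eigenvectorBasis.repr (WithLp.toLp 2 x) j • hA.eigenvectorBasis j : EuclideanSpace ℝ V) i by rw [WithLp.ofLp_sum, Finset.sum_apply]]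
  rw [Finset.sum_apply]
  congr 1; funext j
  rw [show (hA.eigenvectorBasis.repr (WithLp.toLp 2 x) j • hA.eigenvectorBasis j : EuclideanSpace ℝ V) i = hA.eigenvectorBasis.repr (WithLp.toLp 2 x) j * hA.eigenvectorBasis j i from rfl]
  rw [OrthonormalBasis.repr_apply_apply, inner_eq_dot]
  rfl

lemma dot_self_eq (x : V → ℝ) : x ⬝ᵥ x = ∑ j, (coef hA x j)^2 := by
  conv_lhs => rw [x_eq_sum hA x]
  rw [sum_dotP]
  congr 1; funext j
  rw [smul_dotProduct, dotP_sum]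
  simp [dotProduct_smul, evB_dot, sq, mul_comm]

lemma dot_mulVec_eq (x : V → ℝ) :
    x ⬝ᵥ (A *ᵥ x) = ∑ j, hA.eigenvalues j * (coef hA x j)^2 := by
  conv_lhs => rw [x_eq_sum hA x]
  rw [mulVec_sumv, sum_dotP]
  congr 1; funext j
  simp only [Matrix.mulVec_smul, evB_mulVec]
  rw [smul_dotProduct, dotP_sum]
  simp only [dotProduct_smul, smul_dotProduct, smul_eq_mul, evB_dot, mul_ite, mul_one, mul_zero, Finset.sum_ite_eq']
  simp [sq]; ring

lemma coef_eq_zero_imp (x : V → ℝ) (h : ∀ j, coef hA x j = 0) : x = 0 := by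
  rw [x_eq_sum hA x]; simp [h]

/-- symmetric matrix: v ⬝ (A x) = (A v) ⬝ x -/
lemma dot_mulVec_symm (v x : V → ℝ) : v ⬝ᵥ (A *ᵥ x) = (A *ᵥ v) ⬝ᵥ x := by
  rw [Matrix.dotProduct_mulVec, ← Matrix.mulVec_transpose]
  congr 1
  rw [show Aᵀ = A from by simpa [Matrix.IsHermitian] using hA]

lemma evs_eq_range : evs A = Set.range hA.eigenvalues := by
  ext t
  constructor
  · rintro ⟨f, hf, hAf⟩
    by_contra hr
    apply hf
    apply coef_eq_zero_imp hA
    intro j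
    have h1 : evB hA j ⬝ᵥ (A *ᵥ f) = hA.eigenvalues j * coef hA f j := by
      rw [dot_mulVec_symm hA, evB_mulVec, smul_dotProduct]
      simp [coef]
    have h2 : evB hA j ⬝ᵥ (A *ᵥ f) = t * coef hA f j := by
      rw [hAf, dotProduct_smul]
      simp [coef]
    have h3 : (hA.eigenvalues j - t) * coef hA f j = 0 := by
      rw [sub_mul, h1.symm.trans h2]; ring
    rcases mul_eq_zero.1 h3 with h4 | h4
    · exact absurd ⟨j, by linarith [sub_eq_zero.1 h4]⟩ hr
    · exact h4
  · rintro ⟨j, rfl⟩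
    refine ⟨evB hA j, ?_, evB_mulVec hA j⟩
    intro h0
    have h1 := evB_dot hA j j
    rw [h0] at h1
    simp at h1

lemma bddAbove_evs : BddAbove (evs A) := by
  rw [evs_eq_range hA]; exact (Set.finite_range _).bddAbove

lemma sSup_evs_mem [Nonempty V] : sSup (evs A) ∈ evs A := by
  have hne : (evs A).Nonempty := by
    rw [evs_eq_range hA]; exact Set.range_nonempty _
  have hfin : (evs A).Finite := by
    rw [evs_eq_range hA]; exact Set.finite_range _
  exact hne.csSup_mem hfin

lemma eigenvalue_le [Nonempty V] (j : V) : hA.eigenvalues j ≤ sSup (evs A) :=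
  le_csSup (bddAbove_evs hA) (by rw [evs_eq_range hA]; exact ⟨j, rfl⟩)

lemma rayleigh_le [Nonempty V] (x : V → ℝ) :
    x ⬝ᵥ (A *ᵥ x) ≤ sSup (evs A) * (x ⬝ᵥ x) := by
  rw [dot_mulVec_eq hA, dot_self_eq hA, Finset.mul_sum]
  exact Finset.sum_le_sum fun j _ => mul_le_mul_of_nonneg_right (eigenvalue_le hA j) (sq_nonneg _)

lemma rayleigh_eq_imp [Nonempty V] (x : V → ℝ)
    (h : x ⬝ᵥ (A *ᵥ x) = sSup (evs A) * (x ⬝ᵥ x)) : A *ᵥ x = sSup (evs A) • x := by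
  set ρ := sSup (evs A) with hρ
  have hsum : ∑ j, (ρ - hA.eigenvalues j) * (coef hA x j)^2 = 0 := by
    have h1 := dot_mulVec_eq hA x
    have h2 := dot_self_eq hA x
    simp only [sub_mul]
    rw [Finset.sum_sub_distrib, ← Finset.mul_sum, ← h2, ← h1, h]
    ring
  have hterm := (Finset.sum_eq_zero_iff_of_nonneg (fun j _ =>
    mul_nonneg (sub_nonneg.2 (eigenvalue_le hA j)) (sq_nonneg (coef hA x j)))).1 hsum
  have key : ∀ j, hA.eigenvalues j * coef hA x j = ρ * coef hA x j := by
    intro j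
    rcases mul_eq_zero.1 (hterm j (Finset.mem_univ j)) with h' | h'
    · rw [show hA.eigenvalues j = ρ from by linarith [sub_eq_zero.1 h']]
    · rw [pow_eq_zero_iff (n := 2) (by norm_num)] at h'
      rw [h', mul_zero, mul_zero]
  calc A *ᵥ x = A *ᵥ ∑ j, coef hA x j • evB hA j := by rw [← x_eq_sum]
    _ = ∑ j, coef hA x j • (A *ᵥ evB hA j) := by
        rw [mulVec_sumv]
        exact Finset.sum_congr rfl fun j _ => Matrix.mulVec_smul _ _ _
    _ = ∑ j, ρ • (coef hA x j • evB hA j) := by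
        refine Finset.sum_congr rfl fun j _ => ?_
        rw [evB_mulVec, smul_smul, smul_smul, mul_comm, key j]
    _ = ρ • x := by rw [← Finset.smul_sum, ← x_eq_sum]

end Spectral

/-! ### Graph-specific lemmas -/

section Graph
variable {V : Type*} [Fintype V] [DecidableEq V]

lemma adjM_isHerm (G : SimpleGraph V) : (adjM G).IsHermitian := by
  unfold Matrix.IsHermitian
  ext i j
  simp [adjM, Matrix.conjTranspose_apply, SimpleGraph.adj_comm]

lemma adjM_nonneg (G : SimpleGraph V) (a b : V) : 0 ≤ adjM G a b := by
  unfold adjM; split_ifs <;> norm_num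

lemma specRad_eq (G : SimpleGraph V) : specRad G = sSup (evs (adjM G)) := rfl

lemma zero_prop {G : SimpleGraph V} (hc : G.Connected) {t : ℝ} {y : V → ℝ}
    (hy : adjM G *ᵥ y = t • y) (h0 : ∀ v, 0 ≤ y v) {u : V} (hu : y u = 0) : y = 0 := by
  have step : ∀ a b : V, G.Adj a b → y a = 0 → y b = 0 := by
    intro a b hab ha
    have hAa : ∑ w, adjM G a w * y w = 0 := by
      have h1 := congrFun hy a
      simp only [Matrix.mulVec, dotProduct, Pi.smul_apply, smul_eq_mul] at h1
      rw [h1, ha, mul_zero]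
    have h2 := (Finset.sum_eq_zero_iff_of_nonneg (fun w _ =>
      mul_nonneg (adjM_nonneg G a w) (h0 w))).1 hAa b (Finset.mem_univ b)
    rw [show adjM G a b = 1 from by simp [adjM, hab]] at h2
    linarith
  suffices H : ∀ (a b : V), y a = 0 → ∀ (p : G.Walk a b), y b = 0 by
    funext v
    obtain ⟨p⟩ := hc.preconnected u v
    exact H u v hu p
  intro a b ha p
  induction p with
  | nil => exact ha
  | cons h q ih => exact ih (step _ _ h ha)

lemma abs_eigvec {G : SimpleGraph V} [Nonempty V] {x : V → ℝ}
    (hx : adjM G *ᵥ x = specRad G • x) :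
    adjM G *ᵥ (fun v => |x v|) = specRad G • (fun v => |x v|) := by
  set y : V → ℝ := fun v => |x v| with hy
  have hyy : y ⬝ᵥ y = x ⬝ᵥ x := by
    simp [dotProduct, hy, abs_mul_abs_self]
  have hxAx : x ⬝ᵥ (adjM G *ᵥ x) = specRad G * (x ⬝ᵥ x) := by
    rw [hx, dotProduct_smul]; rfl
  have hle : x ⬝ᵥ (adjM G *ᵥ x) ≤ y ⬝ᵥ (adjM G *ᵥ y) := by
    rw [dot_mulVec_double, dot_mulVec_double]
    refine Finset.sum_le_sum fun v _ => Finset.sum_le_sum fun w _ => ?_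
    calc adjM G v w * x v * x w ≤ |adjM G v w * x v * x w| := le_abs_self _
      _ = adjM G v w * y v * y w := by
          rw [abs_mul, abs_mul, abs_of_nonneg (adjM_nonneg G v w)]
  have hub : y ⬝ᵥ (adjM G *ᵥ y) ≤ specRad G * (y ⬝ᵥ y) := by
    rw [specRad_eq]
    exact rayleigh_le (adjM_isHerm G) y
  rw [hyy] at hub
  have heq : y ⬝ᵥ (adjM G *ᵥ y) = specRad G * (y ⬝ᵥ y) := by
    rw [hyy]; linarith
  rw [specRad_eq] at heq ⊢
  exact rayleigh_eq_imp (adjM_isHerm G) y heq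

lemma no_zero_entry {G : SimpleGraph V} [Nonempty V] (hc : G.Connected) {x : V → ℝ}
    (hx0 : x ≠ 0) (hx : adjM G *ᵥ x = specRad G • x) (v : V) : x v ≠ 0 := by
  intro hv
  have hy := abs_eigvec hx
  have hz : (fun w => |x w|) = 0 :=
    zero_prop hc hy (fun w => abs_nonneg _) (u := v) (by simp [hv])
  apply hx0
  funext w
  have := congrFun hz w
  simpa using this

/-- Extension by zero. -/
noncomputable def ext0 (u : V) (y : {v : V // v ≠ u} → ℝ) : V → ℝ :=
  fun v => if h : v = u then 0 else y ⟨v, h⟩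

lemma ext0_apply_ne (u : V) (y : {v : V // v ≠ u} → ℝ) (w : {v : V // v ≠ u}) :
    ext0 u y w.1 = y w := by simp [ext0, w.2]

lemma ext0_apply_u (u : V) (y : {v : V // v ≠ u} → ℝ) : ext0 u y u = 0 := by simp [ext0]

lemma ext0_eq_zero_iff (u : V) (y : {v : V // v ≠ u} → ℝ) : ext0 u y = 0 ↔ y = 0 := by
  constructor
  · intro h; funext w
    have := congrFun h w.1
    rwa [ext0_apply_ne] at this
  · intro h; funext v
    unfold ext0; split_ifs with hv
    · rfl
    · rw [h]; rfl

lemma ext0_dot (u : V) (y z : {v : V // v ≠ u} → ℝ) :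
    ext0 u y ⬝ᵥ ext0 u z = y ⬝ᵥ z := by
  unfold dotProduct
  rw [sum_split u]
  simp [ext0_apply_u, ext0_apply_ne]

lemma ext0_dot_mulVec (G : SimpleGraph V) (u : V) (y : {v : V // v ≠ u} → ℝ) :
    ext0 u y ⬝ᵥ (adjM G *ᵥ ext0 u y) = y ⬝ᵥ (adjM (delVert G u) *ᵥ y) := by
  rw [dot_mulVec_double, dot_mulVec_double, sum_split u]
  simp only [ext0_apply_u, mul_zero, zero_mul, Finset.sum_const_zero, zero_add]
  refine Finset.sum_congr rfl fun w _ => ?_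
  rw [sum_split u]
  simp only [ext0_apply_u, mul_zero, zero_add, ext0_apply_ne]
  refine Finset.sum_congr rfl fun w' _ => ?_
  congr 1

lemma dot_self_pos {x : V → ℝ} (hx : x ≠ 0) : 0 < x ⬝ᵥ x := by
  obtain ⟨v, hv⟩ := Function.ne_iff.1 hx
  have : (0:ℝ) < x v * x v := by
    rcases lt_or_gt_of_ne (show x v ≠ 0 from hv) with h | h <;> nlinarith
  unfold dotProduct
  refine Finset.sum_pos' (fun w _ => mul_self_nonneg _) ⟨v, Finset.mem_univ v, this⟩

lemma specRad_delVert_lt {G : SimpleGraph V} (hc : G.Connected) (u : V)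
    [hne : Nonempty {v : V // v ≠ u}] : specRad (delVert G u) < specRad G := by
  haveI : Nonempty V := ⟨u⟩
  have hA' := adjM_isHerm (delVert G u)
  obtain ⟨y, hy0, hy⟩ := sSup_evs_mem hA'
  set ρ' := sSup (evs (adjM (delVert G u))) with hρ'
  set x := ext0 u y with hxdef
  have hx0 : x ≠ 0 := fun h => hy0 ((ext0_eq_zero_iff u y).1 h)
  have hxu : x u = 0 := ext0_apply_u u y
  have hray : x ⬝ᵥ (adjM G *ᵥ x) = ρ' * (x ⬝ᵥ x) := by
    rw [hxdef, ext0_dot_mulVec, hy, dotProduct_smul, ext0_dot]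
    rfl
  have hle : ρ' * (x ⬝ᵥ x) ≤ specRad G * (x ⬝ᵥ x) := by
    rw [← hray, specRad_eq]
    exact rayleigh_le (adjM_isHerm G) x
  have hxx : 0 < x ⬝ᵥ x := dot_self_pos hx0
  have hle' : ρ' ≤ specRad G := le_of_mul_le_mul_right (by linarith [hle]) hxx
  rw [specRad_eq (delVert G u), ← hρ']
  rcases lt_or_eq_of_le hle' with h | h
  · exact h
  · exfalso
    have heq : x ⬝ᵥ (adjM G *ᵥ x) = specRad G * (x ⬝ᵥ x) := by rw [hray, h]
    rw [specRad_eq] at heq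
    have hev := rayleigh_eq_imp (adjM_isHerm G) x heq
    rw [← specRad_eq] at hev
    exact no_zero_entry hc hx0 hev u hxu

lemma rayleigh_witness_le {G : SimpleGraph V} (u : V) {x : V → ℝ} (hx0 : x ≠ 0)
    (hxu : x u = 0) {t : ℝ} (ht : t * (x ⬝ᵥ x) ≤ x ⬝ᵥ (adjM G *ᵥ x)) :
    t ≤ specRad (delVert G u) := by
  obtain ⟨v, hv⟩ := Function.ne_iff.1 hx0
  haveI : Nonempty {w : V // w ≠ u} := ⟨⟨v, fun h => hv (h ▸ hxu)⟩⟩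
  set y : {w : V // w ≠ u} → ℝ := fun w => x w.1 with hy
  have hxy : ext0 u y = x := by
    funext w
    unfold ext0
    split_ifs with h
    · rw [h, hxu]
    · rfl
  have hy0 : y ≠ 0 := fun h => hx0 (by rw [← hxy, h, (ext0_eq_zero_iff u 0).2 rfl])
  have hub : y ⬝ᵥ (adjM (delVert G u) *ᵥ y) ≤ specRad (delVert G u) * (y ⬝ᵥ y) := by
    rw [specRad_eq]
    exact rayleigh_le (adjM_isHerm _) y
  rw [← ext0_dot_mulVec, hxy] at hub
  have hyyxx : y ⬝ᵥ y = x ⬝ᵥ x := by rw [← ext0_dot u y y, hxy]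
  rw [hyyxx] at hub
  have hxx : 0 < x ⬝ᵥ x := dot_self_pos hx0
  exact le_of_mul_le_mul_right (by linarith) hxx

lemma second_le_delVert {G : SimpleGraph V} [Nonempty V] (u : V) {i0 j : V}
    (hmax : (adjM_isHerm G).eigenvalues i0 = sSup (evs (adjM G))) (hne : j ≠ i0) :
    (adjM_isHerm G).eigenvalues j ≤ specRad (delVert G u) := by
  set hA := adjM_isHerm G
  set lam1 := hA.eigenvalues i0 with hl1
  set lam2 := hA.eigenvalues j with hl2
  have hl21 : lam2 ≤ lam1 := by rw [hmax, hl2]; exact eigenvalue_le hA j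
  by_cases h1 : evB hA i0 u = 0
  · -- use the top eigenvector itself
    have hx0 : evB hA i0 ≠ 0 := by
      intro h0
      have h1 := evB_dot hA i0 i0
      rw [h0] at h1; simp at h1
    have hd : evB hA i0 ⬝ᵥ (adjM G *ᵥ evB hA i0) = lam1 * (evB hA i0 ⬝ᵥ evB hA i0) := by
      rw [evB_mulVec, dotProduct_smul]; rfl
    have := rayleigh_witness_le u hx0 h1 (le_of_eq (by rw [hd]))
    linarith
  · -- mix the two eigenvectors
    set a := evB hA j u with ha
    set b := evB hA i0 u with hb
    set x : V → ℝ := a • evB hA i0 - b • evB hA j with hx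
    have hxu : x u = 0 := by
      simp only [hx, Pi.sub_apply, Pi.smul_apply, smul_eq_mul]
      rw [ha, hb]; ring
    have hd11 := evB_dot hA i0 i0
    have hd12 := evB_dot hA i0 j
    have hd21 := evB_dot hA j i0
    have hd22 := evB_dot hA j j
    rw [if_pos rfl] at hd11 hd22
    rw [if_neg (fun h => hne h.symm)] at hd12
    rw [if_neg hne] at hd21
    have hxx : x ⬝ᵥ x = a^2 + b^2 := by
      rw [hx]
      simp only [sub_dotProduct, dotProduct_sub, smul_dotProduct,
        dotProduct_smul, smul_eq_mul, hd11, hd12, hd21, hd22]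
      ring
    have hAx : adjM G *ᵥ x = a • (lam1 • evB hA i0) - b • (lam2 • evB hA j) := by
      rw [hx, Matrix.mulVec_sub, Matrix.mulVec_smul, Matrix.mulVec_smul,
        evB_mulVec, evB_mulVec]
    have hxAx : x ⬝ᵥ (adjM G *ᵥ x) = a^2 * lam1 + b^2 * lam2 := by
      rw [hAx, hx]
      simp only [sub_dotProduct, dotProduct_sub, smul_dotProduct,
        dotProduct_smul, smul_eq_mul, hd11, hd12, hd21, hd22]
      ring
    have hx0 : x ≠ 0 := by
      intro h0
      have : x ⬝ᵥ x = 0 := by rw [h0]; simp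
      rw [hxx] at this
      have hb0 : b = 0 := by nlinarith [sq_nonneg a, sq_nonneg b]
      exact h1 hb0
    have hray : lam2 * (x ⬝ᵥ x) ≤ x ⬝ᵥ (adjM G *ᵥ x) := by
      rw [hxx, hxAx]
      nlinarith [sq_nonneg a]
    exact rayleigh_witness_le u hx0 hxu hray

lemma phi_eq_prod (G : SimpleGraph V) (t : ℝ) :
    phi G t = ∏ j, (t - (adjM_isHerm G).eigenvalues j) := by
  set hA := adjM_isHerm G
  set U : Matrix V V ℝ := (hA.eigenvectorUnitary : Matrix V V ℝ) with hU
  have hUU : U * star U = 1 := Matrix.mem_unitaryGroup_iff.mp hA.eigenvectorUnitary.2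
  have hspec : adjM G = U * Matrix.diagonal (RCLike.ofReal ∘ hA.eigenvalues) * star U :=
    hA.spectral_theorem
  have hD : Matrix.diagonal (RCLike.ofReal ∘ hA.eigenvalues) =
      Matrix.diagonal (hA.eigenvalues) := by
    congr 1
  have key : t • (1 : Matrix V V ℝ) - adjM G =
      U * Matrix.diagonal (fun j => t - hA.eigenvalues j) * star U := by
    have hdiag : Matrix.diagonal (fun j => t - hA.eigenvalues j) =
        t • (1 : Matrix V V ℝ) - Matrix.diagonal hA.eigenvalues := by
      rw [Matrix.smul_one_eq_diagonal, ← Matrix.diagonal_sub]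
    rw [hdiag, Matrix.mul_sub, Matrix.sub_mul, Matrix.mul_smul, Matrix.mul_one,
      Matrix.smul_mul, hUU, ← hD, ← hspec]
  unfold phi
  rw [key, Matrix.det_mul_right_comm, hUU, Matrix.one_mul, Matrix.det_diagonal]

end Graph

section Iso
variable {V W : Type*} [Fintype V] [Fintype W] [DecidableEq V] [DecidableEq W]

lemma evs_iso_subset {G : SimpleGraph V} {H : SimpleGraph W} (e : G ≃g H) :
    evs (adjM G) ⊆ evs (adjM H) := by
  rintro t ⟨f, hf, hAf⟩
  set ε : V ≃ W := e.toEquiv with hε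
  have hadj : ∀ (a b : V), adjM H (ε a) (ε b) = adjM G a b := by
    intro a b
    unfold adjM
    exact if_congr e.map_adj_iff rfl rfl
  refine ⟨f ∘ ε.symm, ?_, ?_⟩
  · intro h
    apply hf
    funext v
    have h2 := congrFun h (ε v)
    simpa using h2
  · funext w
    show ∑ w', adjM H w w' * f (ε.symm w') = (t • (f ∘ ε.symm)) w
    have h1 : ∑ w', adjM H w w' * f (ε.symm w') = ∑ v, adjM G (ε.symm w) v * f v := by
      refine Fintype.sum_equiv ε.symm _ _ (fun w' => ?_)
      congr 1
      rw [← hadj (ε.symm w) (ε.symm w'), ε.apply_symm_apply, ε.apply_symm_apply]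
    rw [h1]
    have h2 := congrFun hAf (ε.symm w)
    simpa [Matrix.mulVec, dotProduct] using h2

lemma specRad_iso {G : SimpleGraph V} {H : SimpleGraph W} (e : G ≃g H) :
    specRad G = specRad H := by
  rw [specRad_eq, specRad_eq]
  have hset : evs (adjM G) = evs (adjM H) :=
    le_antisymm (evs_iso_subset e) (evs_iso_subset e.symm)
  rw [hset]

end Iso

end SpecAux

open SpecAux

/-- Lemma 2.12: if `G1`, `G2` are connected, `G1 − u1 ≅ G2 − u2`, and `φ_{G2}(ρ(G1)) > 0`,
then `ρ(G1) > ρ(G2)`. -/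
theorem specRad_lt_of_phi_pos {V1 V2 : Type*}
    [Fintype V1] [DecidableEq V1] [Fintype V2] [DecidableEq V2]
    (G1 : SimpleGraph V1) (G2 : SimpleGraph V2)
    (hG1 : G1.Connected) (hG2 : G2.Connected) (u1 : V1) (u2 : V2)
    (hiso : Nonempty (delVert G1 u1 ≃g delVert G2 u2))
    (hphi : 0 < phi G2 (specRad G1)) :
    specRad G2 < specRad G1 := by
  obtain ⟨e⟩ := hiso
  haveI : Nonempty V1 := hG1.nonempty
  haveI : Nonempty V2 := hG2.nonempty
  by_contra hle
  push_neg at hle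
  set ρ1 := specRad G1 with hρ1
  set ρ2 := specRad G2 with hρ2
  set hA2 := adjM_isHerm G2 with hA2def
  obtain ⟨i0, hi0⟩ : ∃ i0, hA2.eigenvalues i0 = ρ2 := by
    have hmem := sSup_evs_mem hA2
    rw [evs_eq_range hA2] at hmem
    obtain ⟨i0, hi0⟩ := hmem
    exact ⟨i0, by rw [hi0, ← evs_eq_range hA2, ← specRad_eq]⟩
  have hprod := phi_eq_prod G2 ρ1
  have hsplit : ∏ j, (ρ1 - hA2.eigenvalues j) =
      (ρ1 - hA2.eigenvalues i0) * ∏ j ∈ Finset.univ.erase i0, (ρ1 - hA2.eigenvalues j) :=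
    (Finset.mul_prod_erase Finset.univ _ (Finset.mem_univ i0)).symm
  have hrest : ∀ j ∈ Finset.univ.erase i0, 0 < ρ1 - hA2.eigenvalues j := by
    intro j hj
    have hjne : j ≠ i0 := (Finset.mem_erase.1 hj).1
    have h1 : hA2.eigenvalues j ≤ specRad (delVert G2 u2) :=
      second_le_delVert u2 (hi0.trans (hρ2.trans (specRad_eq G2))) hjne
    have h2 : specRad (delVert G1 u1) = specRad (delVert G2 u2) := specRad_iso e
    haveI : Nonempty {v : V2 // v ≠ u2} := by
      by_cases hju : j = u2
      · exact ⟨⟨i0, fun h => hjne (hju.trans h.symm)⟩⟩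
      · exact ⟨⟨j, hju⟩⟩
    haveI : Nonempty {v : V1 // v ≠ u1} := ⟨e.toEquiv.symm (Classical.arbitrary _)⟩
    have h3 : specRad (delVert G1 u1) < ρ1 := specRad_delVert_lt hG1 u1
    linarith
  have hpos : 0 < ∏ j ∈ Finset.univ.erase i0, (ρ1 - hA2.eigenvalues j) :=
    Finset.prod_pos hrest
  have hlast : ρ1 - hA2.eigenvalues i0 ≤ 0 := by rw [hi0]; linarith
  have : phi G2 ρ1 ≤ 0 := by
    rw [hprod, hsplit]
    exact mul_nonpos_of_nonpos_of_nonneg hlast (le_of_lt hpos)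
  linarith
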